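/- Let P > 0, N₀ > 0, η ∈ (0,1], β ∈ (0,1). Define θ₂ = √(N₀/(ηβP)) and ψ(x) = N₀²/( P(1−β)(ηβP·x² − N₀) ) − x for x ≠ θ₂. Then ψ(x) < 0 for all 0 ≤ x < θ₂; there exists a unique θ₃ ∈ (θ₂, ∞) with ψ(θ₃) = 0, and θ₃ satisfies the cubic equation θ₃³ − A·θ₃ − B = 0 with A = N₀/(ηβP) and B = N₀²/(ηβ(1−β)P²); moreover ψ(x) ≥ 0 for θ₂ < x ≤ θ₃ and ψ(x) < 0 for x > θ₃. -/

import Mathlib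

open Real

set_option maxHeartbeats 1600000 in
/-- **Sign pattern of `ψ` for the PS policy.** With `θ₂ = √(N₀/(ηβP))` and
`ψ(x) = N₀²/(P(1-β)(ηβP x² - N₀)) - x`, `ψ < 0` on `[0, θ₂)`; there is a unique zero
`θ₃` of `ψ` in `(θ₂, ∞)`, which solves `x³ - Ax - B = 0` with `A = N₀/(ηβP)`,
`B = N₀²/(ηβ(1-β)P²)`; `ψ ≥ 0` on `(θ₂, θ₃]` and `ψ < 0` on `(θ₃, ∞)`. -/
theorem psi_sign_PS (P N0 η β : ℝ) (hP : 0 < P) (hN0 : 0 < N0)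
    (hη0 : 0 < η) (hη1 : η ≤ 1) (hβ0 : 0 < β) (hβ1 : β < 1)
    (θ2 : ℝ) (hθ2 : θ2 = Real.sqrt (N0 / (η * β * P)))
    (ψ : ℝ → ℝ)
    (hψ : ∀ x, ψ x = N0 ^ 2 / (P * (1 - β) * (η * β * P * x ^ 2 - N0)) - x)
    (A B : ℝ) (hA : A = N0 / (η * β * P)) (hB : B = N0 ^ 2 / (η * β * (1 - β) * P ^ 2)) :
    (∀ x, 0 ≤ x → x < θ2 → ψ x < 0) ∧
    ∃ θ3, θ2 < θ3 ∧ ψ θ3 = 0 ∧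
      (∀ t, θ2 < t → ψ t = 0 → t = θ3) ∧
      θ3 ^ 3 - A * θ3 - B = 0 ∧
      (∀ x, θ2 < x → x ≤ θ3 → 0 ≤ ψ x) ∧
      (∀ x, θ3 < x → ψ x < 0) := by
  set c : ℝ := η * β * P with hc_def
  set D : ℝ := P * (1 - β) with hD_def
  have hc : 0 < c := by positivity
  have hD : 0 < D := by
    have : 0 < 1 - β := by linarith
    positivity
  have hθ2pos : 0 < θ2 := by
    rw [hθ2]; exact Real.sqrt_pos.mpr (by positivity)
  have hcD : η * β * (1 - β) * P ^ 2 = c * D := by rw [hc_def, hD_def]; ring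
  clear_value c D
  have hθ2nn : 0 ≤ θ2 := hθ2pos.le
  have hθ2sq : c * θ2 ^ 2 = N0 := by
    rw [hθ2, sq_sqrt (by positivity : (0:ℝ) ≤ N0 / c)]
    field_simp
  -- the cubic
  set g : ℝ → ℝ := fun x => D * c * x ^ 3 - D * N0 * x - N0 ^ 2 with hg_def
  clear_value g
  have hden : ∀ x, θ2 < x → 0 < c * x ^ 2 - N0 := by
    intro x hx
    have h1 : θ2 ^ 2 < x ^ 2 := by
      apply pow_lt_pow_left₀ hx hθ2nn
      norm_num
    have h2 : c * θ2 ^ 2 < c * x ^ 2 := by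
      exact mul_lt_mul_of_pos_left h1 hc
    linarith [hθ2sq]
  have hmono : ∀ a b, θ2 ≤ a → a < b → g a < g b := by
    intro a b ha hab
    have ha0 : 0 ≤ a := le_trans hθ2nn ha
    have hb0 : 0 < b := lt_of_le_of_lt ha0 hab
    have hca : N0 ≤ c * a ^ 2 := by
      have h1 : θ2 ^ 2 ≤ a ^ 2 := pow_le_pow_left₀ hθ2nn ha 2
      have h2 : c * θ2 ^ 2 ≤ c * a ^ 2 := mul_le_mul_of_nonneg_left h1 hc.le
      linarith [hθ2sq]
    have key : g b - g a = D * (b - a) * (c * (b ^ 2 + a * b + a ^ 2) - N0) := by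
      simp only [hg_def]; ring
    have h2 : 0 < c * (b ^ 2 + a * b + a ^ 2) - N0 := by
      have e1 : 0 < c * b ^ 2 := by positivity
      have e2 : 0 ≤ c * (a * b) := by positivity
      nlinarith [hca]
    have h3 : 0 < D * (b - a) * (c * (b ^ 2 + a * b + a ^ 2) - N0) :=
      mul_pos (mul_pos hD (sub_pos.mpr hab)) h2
    linarith [key, h3]
  have hpsi_g : ∀ x, θ2 < x → ψ x = -(g x) / (D * (c * x ^ 2 - N0)) := by
    intro x hx
    have hd := hden x hx
    rw [hψ, hg_def]
    field_simp
    ring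
  constructor
  · intro x hx0 hxlt
    have h1 : x ^ 2 < θ2 ^ 2 := by
      apply pow_lt_pow_left₀ hxlt hx0
      norm_num
    have hneg : c * x ^ 2 - N0 < 0 := by
      have h2 : c * x ^ 2 < c * θ2 ^ 2 := mul_lt_mul_of_pos_left h1 hc
      linarith [hθ2sq]
    have : N0 ^ 2 / (D * (c * x ^ 2 - N0)) < 0 :=
      div_neg_of_pos_of_neg (by positivity) (mul_neg_of_pos_of_neg hD hneg)
    rw [hψ]
    linarith [this]
  · -- existence of θ3 via IVT on g
    have hgθ2 : g θ2 = -N0 ^ 2 := by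
      simp only [hg_def]
      linear_combination (D * θ2) * hθ2sq
    set K : ℝ := D * c * (2 * θ2 + 1) with hK_def
    have hK : 0 < K := by positivity
    clear_value K
    set M : ℝ := max (θ2 + 1) (N0 ^ 2 / K + 1) with hM_def
    have hM1 : θ2 + 1 ≤ M := le_max_left _ _
    have hM2 : N0 ^ 2 / K + 1 ≤ M := le_max_right _ _
    clear_value M
    have hMθ2 : θ2 ≤ M := by linarith
    have hM0 : 0 < M := by linarith
    have hgM : 0 < g M := by
      have hMsq : (θ2 + 1) ^ 2 ≤ M ^ 2 := pow_le_pow_left₀ (by positivity) hM1 2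
      have h1' : c * (θ2 + 1) ^ 2 ≤ c * M ^ 2 := mul_le_mul_of_nonneg_left hMsq hc.le
      have h1 : c * (2 * θ2 + 1) ≤ c * M ^ 2 - N0 := by nlinarith [hθ2sq]
      have hK' : K * (N0 ^ 2 / K) = N0 ^ 2 := by field_simp
      have h2' : K * (N0 ^ 2 / K + 1) ≤ K * M := mul_le_mul_of_nonneg_left hM2 hK.le
      have h2 : N0 ^ 2 < K * M := by nlinarith
      have h3 : g M = D * (c * M ^ 2 - N0) * M - N0 ^ 2 := by
        simp only [hg_def]; ring
      have h4' : K ≤ D * (c * M ^ 2 - N0) := by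
        rw [hK_def]
        calc D * c * (2 * θ2 + 1) = D * (c * (2 * θ2 + 1)) := by ring
        _ ≤ D * (c * M ^ 2 - N0) := mul_le_mul_of_nonneg_left h1 hD.le
      have h4 : K * M ≤ D * (c * M ^ 2 - N0) * M := mul_le_mul_of_nonneg_right h4' hM0.le
      linarith
    have hcont : ContinuousOn g (Set.Icc θ2 M) := by
      apply Continuous.continuousOn
      simp only [hg_def]
      exact ((continuous_const.mul (continuous_pow 3)).sub
        (continuous_const.mul continuous_id)).sub continuous_const
    have hivt := intermediate_value_Icc hMθ2 hcont
    have h0mem : (0 : ℝ) ∈ Set.Icc (g θ2) (g M) := by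
      constructor
      · rw [hgθ2]; nlinarith [sq_nonneg N0]
      · exact hgM.le
    obtain ⟨θ3, hθ3mem, hgθ3⟩ := hivt h0mem
    have hθ3gt : θ2 < θ3 := by
      rcases lt_or_eq_of_le hθ3mem.1 with h | h
      · exact h
      · exfalso; rw [← h] at hgθ3; rw [hgθ2] at hgθ3; nlinarith [sq_nonneg N0]
    refine ⟨θ3, hθ3gt, ?_, ?_, ?_, ?_, ?_⟩
    · rw [hpsi_g θ3 hθ3gt, hgθ3]; simp
    · intro t ht hψt
      have hdt := hden t ht
      have hgt : g t = 0 := by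
        have h0 : -(g t) / (D * (c * t ^ 2 - N0)) = 0 := by
          rw [← hpsi_g t ht]; exact hψt
        rcases div_eq_zero_iff.mp h0 with h | h
        · linarith
        · exact absurd h (by positivity)
      by_contra hne
      rcases lt_or_gt_of_ne hne with h | h
      · have := hmono t θ3 (le_of_lt ht) h; rw [hgt, hgθ3] at this; exact lt_irrefl 0 this
      · have := hmono θ3 t (le_of_lt hθ3gt) h; rw [hgt, hgθ3] at this; exact lt_irrefl 0 this
    · -- cubic
      have hgexp : D * c * θ3 ^ 3 - D * N0 * θ3 - N0 ^ 2 = 0 := by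
        rw [hg_def] at hgθ3; exact hgθ3
      rw [hA, hB, hcD]
      have hc' : c ≠ 0 := ne_of_gt hc
      have hD' : D ≠ 0 := ne_of_gt hD
      field_simp
      linear_combination hgexp
    · intro x hx hxle
      have hgx : g x ≤ 0 := by
        rcases lt_or_eq_of_le hxle with h | h
        · linarith [hmono x θ3 (le_of_lt hx) h, hgθ3.le]
        · rw [h, hgθ3]
      rw [hpsi_g x hx]
      apply div_nonneg (by linarith) (le_of_lt (mul_pos hD (hden x hx)))
    · intro x hx
      have hx2 : θ2 < x := lt_trans hθ3gt hx
      have hgx : 0 < g x := by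
        have := hmono θ3 x (le_of_lt hθ3gt) hx; rw [hgθ3] at this; exact this
      rw [hpsi_g x hx2]
      apply div_neg_of_neg_of_pos (by linarith) (mul_pos hD (hden x hx2))
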